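/- Suppose g has a left limit α at x (g(m) → α as m → x with m < x) and a right limit β at x (g(m) → β as m → x with m > x), and that g(x) lies in the closed interval [min(α,β), max(α,β)]. Then H(x) = [min(α,β), max(α,β)]. -/
import Mathlib


open Filter

/-- The convexified set-valued map `H(x) = ⋂_{η>0} closure (convexHull (g '' ball x η))`
from the differential-inclusion analysis. -/
noncomputable def Hmap (g : ℝ → ℝ) (x : ℝ) : Set ℝ :=
  ⋂ η ∈ Set.Ioi (0 : ℝ), closure (convexHull ℝ (g '' {m : ℝ | |m - x| < η}))

/-- At a jump point of `g` with one-sided limits `α` (from the left) and `β` (from the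
right), and with `g x` between them, `H(x)` is the interval between the one-sided
limits. -/
theorem Hmap_eq_interval_at_jump (B : ℝ) (hB : 0 ≤ B) (g : ℝ → ℝ)
    (hg : ∀ x, |g x| ≤ B) (x α β : ℝ)
    (hleft : Tendsto g (nhdsWithin x (Set.Iio x)) (nhds α))
    (hright : Tendsto g (nhdsWithin x (Set.Ioi x)) (nhds β))
    (hx : g x ∈ Set.Icc (min α β) (max α β)) :
    Hmap g x = Set.Icc (min α β) (max α β) := by
  apply Set.Subset.antisymm
  · -- ⊆ : show any element of the intersection lies in [min, max]
    intro y hy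
    have key : ∀ ε : ℝ, 0 < ε → y ∈ Set.Icc (min α β - ε) (max α β + ε) := by
      intro ε hε
      obtain ⟨δ₁, hδ₁, h₁⟩ := (Metric.tendsto_nhdsWithin_nhds).1 hleft ε hε
      obtain ⟨δ₂, hδ₂, h₂⟩ := (Metric.tendsto_nhdsWithin_nhds).1 hright ε hε
      set η := min δ₁ δ₂ with hηdef
      have hη : 0 < η := lt_min hδ₁ hδ₂
      have hsub : g '' {m : ℝ | |m - x| < η} ⊆ Set.Icc (min α β - ε) (max α β + ε) := by
        rintro _ ⟨m, hm, rfl⟩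
        simp only [Set.mem_setOf_eq] at hm
        rcases lt_trichotomy m x with h | h | h
        · have := h₁ h (by rw [Real.dist_eq]; exact hm.trans_le (min_le_left _ _))
          rw [Real.dist_eq, abs_lt] at this
          constructor
          · linarith [min_le_left α β]
          · linarith [le_max_left α β]
        · subst h
          exact ⟨by linarith [hx.1], by linarith [hx.2]⟩
        · have := h₂ h (by rw [Real.dist_eq]; exact hm.trans_le (min_le_right _ _))
          rw [Real.dist_eq, abs_lt] at this
          constructor
          · linarith [min_le_right α β]
          · linarith [le_max_right α β]
      have hyη : y ∈ closure (convexHull ℝ (g '' {m : ℝ | |m - x| < η})) := by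
        have := Set.mem_iInter₂.1 hy η hη
        exact this
      have : closure (convexHull ℝ (g '' {m : ℝ | |m - x| < η}))
          ⊆ Set.Icc (min α β - ε) (max α β + ε) :=
        closure_minimal (convexHull_min hsub (convex_Icc _ _)) isClosed_Icc
      exact this hyη
    constructor
    · by_contra h
      push_neg at h
      have := key ((min α β - y) / 2) (by linarith)
      have := this.1
      linarith
    · by_contra h
      push_neg at h
      have := key ((y - max α β) / 2) (by linarith)
      have := this.2
      linarith
  · -- ⊇ : α and β are in every closure(convexHull …), hence so is the segment
    intro y hy
    apply Set.mem_iInter₂.2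
    intro η hη
    have hη' : 0 < η := hη
    -- the ball as a set
    set S := {m : ℝ | |m - x| < η} with hS
    have hαS : α ∈ closure (g '' S) := by
      apply mem_closure_of_tendsto hleft
      filter_upwards [self_mem_nhdsWithin,
        eventually_nhdsWithin_of_eventually_nhds
          (Metric.eventually_nhds_iff.2 ⟨η, hη', fun {m} hm => by
            simpa [Real.dist_eq] using hm⟩)] with m _ hm
      exact ⟨m, hm, rfl⟩
    have hβS : β ∈ closure (g '' S) := by
      apply mem_closure_of_tendsto hright
      filter_upwards [self_mem_nhdsWithin,
        eventually_nhdsWithin_of_eventually_nhds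
          (Metric.eventually_nhds_iff.2 ⟨η, hη', fun {m} hm => by
            simpa [Real.dist_eq] using hm⟩)] with m _ hm
      exact ⟨m, hm, rfl⟩
    have hsub : closure (g '' S) ⊆ closure (convexHull ℝ (g '' S)) :=
      closure_mono (subset_convexHull ℝ _)
    have hconv : Convex ℝ (closure (convexHull ℝ (g '' S))) :=
      (convex_convexHull ℝ _).closure
    have hseg : segment ℝ α β ⊆ closure (convexHull ℝ (g '' S)) :=
      hconv.segment_subset (hsub hαS) (hsub hβS)
    have : y ∈ segment ℝ α β := by
      rw [segment_eq_uIcc, Set.uIcc]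
      exact hy
    exact hseg this
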